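/- Let B_1, …, B_Q be uniformly intersecting dependences, i.e., B_i(x) = A x + b_i all share the same linear part A, and let FP(τ) = ⋃_{i=1}^{Q} B_i⟨T(τ)⟩ be the combined footprint of tile τ. Then for all τ, δ ∈ ℤ^t, FP(τ+δ) = (A(δ_1·𝐧_1 + … + δ_t·𝐧_t)) +ᵥ FP(τ); moreover, if t = d, T(τ) is nonempty, and each A(𝐧_j) has integer coordinates, then the set {A(Σ_j δ_j 𝐧_j) : δ ∈ ℤ^d and FP(τ+δ) ∩ FP(τ) ≠ ∅} is finite. -/

import Mathlib

open RealInnerProductSpace Pointwise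

/-- for uniformly intersecting dependences `B i x = A x + b i`, the combined
footprint `FP τ = ⋃ i, B i ⟨T τ⟩` translates as `FP (τ+δ) = A (∑ j, δ j • 𝐧 j) +ᵥ FP τ`;
moreover if `t = d`, `T τ` is nonempty and each `A (𝐧 j)` has integer coordinates, only
finitely many translation vectors give overlapping combined footprints. -/
theorem combined_footprint_translate_and_finite
    (d t k Q : ℕ) (ht : t ≤ d)
    (n : Fin t → EuclideanSpace ℝ (Fin d)) (hn : LinearIndependent ℝ n)
    (s : Fin t → ℝ) (hs : ∀ j, 0 < s j)
    (N : Fin t → EuclideanSpace ℝ (Fin d))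
    (hN : ∀ i j, ⟪N i, n j⟫ = if i = j then s j else 0)
    (A : EuclideanSpace ℝ (Fin d) →ₗ[ℝ] EuclideanSpace ℝ (Fin k))
    (b : Fin Q → EuclideanSpace ℝ (Fin k))
    (T : (Fin t → ℤ) → Set (EuclideanSpace ℝ (Fin d)))
    (hT : ∀ τ, T τ = {x | ∀ j, s j * (τ j : ℝ) ≤ ⟪x, n j⟫ ∧ ⟪x, n j⟫ < s j * ((τ j : ℝ) + 1)})
    (FP : (Fin t → ℤ) → Set (EuclideanSpace ℝ (Fin k)))
    (hFP : ∀ τ, FP τ = ⋃ i : Fin Q, (fun x => A x + b i) '' T τ) :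
    (∀ τ δ : Fin t → ℤ, FP (τ + δ) = A (∑ j, (δ j : ℝ) • N j) +ᵥ FP τ) ∧
    (t = d → ∀ τ : Fin t → ℤ, (T τ).Nonempty →
      (∀ j l, ∃ z : ℤ, A (N j) l = (z : ℝ)) →
      {w : EuclideanSpace ℝ (Fin k) | ∃ δ : Fin t → ℤ,
        w = A (∑ j, (δ j : ℝ) • N j) ∧ (FP (τ + δ) ∩ FP τ).Nonempty}.Finite) := by
  -- inner product of a combination of the N's with n j
  have hvn : ∀ (c : Fin t → ℝ) (j : Fin t), ⟪∑ j', c j' • N j', n j⟫ = c j * s j := by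
    intro c j
    rw [sum_inner, Finset.sum_eq_single j]
    · rw [real_inner_smul_left, hN, if_pos rfl]
    · intro i _ hij
      rw [real_inner_smul_left, hN, if_neg hij, mul_zero]
    · intro h; exact absurd (Finset.mem_univ j) h
  have key : ∀ τ δ : Fin t → ℤ, FP (τ + δ) = A (∑ j, (δ j : ℝ) • N j) +ᵥ FP τ := by
    intro τ δ
    set v : EuclideanSpace ℝ (Fin d) := ∑ j, (δ j : ℝ) • N j with hv
    have hix : ∀ (x : EuclideanSpace ℝ (Fin d)) j,
        ⟪-v + x, n j⟫ = ⟪x, n j⟫ - (δ j : ℝ) * s j := by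
      intro x j
      rw [inner_add_left, inner_neg_left, hv, hvn]
      ring
    have hTset : T (τ + δ) = v +ᵥ T τ := by
      ext x
      rw [hT, hT, Set.mem_vadd_set_iff_neg_vadd_mem]
      simp only [Set.mem_setOf_eq, vadd_eq_add, Pi.add_apply, hix]
      constructor
      · intro h j
        have h' := h j
        push_cast at h'
        constructor <;> nlinarith [h'.1, h'.2, hs j]
      · intro h j
        have h' := h j
        push_cast
        constructor <;> nlinarith [h'.1, h'.2, hs j]
    rw [hFP, hFP, hTset]
    ext y
    simp only [Set.mem_iUnion, Set.mem_image, Set.mem_vadd_set, vadd_eq_add]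
    constructor
    · rintro ⟨i, x, ⟨x', hx', rfl⟩, rfl⟩
      refine ⟨A x' + b i, ⟨i, x', hx', rfl⟩, ?_⟩
      rw [map_add]; abel
    · rintro ⟨u, ⟨i, x', hx', rfl⟩, rfl⟩
      refine ⟨i, v + x', ⟨x', hx', rfl⟩, ?_⟩
      rw [map_add]; abel
  refine ⟨key, ?_⟩
  intro htd τ _hTne hAN
  subst htd
  choose z hz using hAN
  have hspan : Submodule.span ℝ (Set.range n) = ⊤ := by
    apply Submodule.eq_top_of_finrank_eq
    rw [finrank_span_eq_card hn]
    simp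
  set C : Fin k → ℝ := fun l => ∑ j, |(z j l : ℝ)| with hC
  set D : Fin k → ℝ := fun l => ∑ i, ∑ i', |b i l - b i' l| with hD
  set M : Fin k → ℤ := fun l => ⌈C l + D l⌉ with hM
  have hfin : ((fun m : Fin k → ℤ => (WithLp.toLp 2 (fun l => (m l : ℝ)) : EuclideanSpace ℝ (Fin k))) ''
      (Set.pi Set.univ fun l : Fin k => Set.Icc (-(M l)) (M l))).Finite :=
    (Set.Finite.pi fun l => Set.finite_Icc _ _).image _
  apply hfin.subset
  rintro w ⟨δ, rfl, u, huδ, huτ⟩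
  rw [key τ δ, Set.mem_vadd_set] at huδ
  obtain ⟨p, hp, hpu⟩ := huδ
  rw [hFP] at hp huτ
  simp only [Set.mem_iUnion, Set.mem_image] at hp huτ
  obtain ⟨i', y', hy', rfl⟩ := hp
  obtain ⟨i, y, hy, hu⟩ := huτ
  rw [vadd_eq_add] at hpu
  have hw : A (∑ j, (δ j : ℝ) • N j) = A y - A y' + (b i - b i') := by
    have h1 : A (∑ j, (δ j : ℝ) • N j) + (A y' + b i') = A y + b i := by
      rw [hpu, ← hu]
    have h2 := eq_sub_of_add_eq h1
    rw [h2]; abel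
  -- coefficients of y - y' in the N basis
  set c : Fin t → ℝ := fun j => (⟪y, n j⟫ - ⟪y', n j⟫) / s j with hc
  have hyy' : y - y' = ∑ j, c j • N j := by
    have horto : ∀ j, ⟪y - y' - ∑ j', c j' • N j', n j⟫ = 0 := by
      intro j
      rw [inner_sub_left, inner_sub_left, hvn]
      have hsj := (hs j).ne'
      rw [hc]
      field_simp
      ring
    have hzero : y - y' - ∑ j', c j' • N j' = 0 := by
      set e := y - y' - ∑ j', c j' • N j' with he
      have hall : ∀ x : EuclideanSpace ℝ (Fin t), ⟪e, x⟫ = 0 := by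
        intro x
        have hx : x ∈ Submodule.span ℝ (Set.range n) := hspan ▸ Submodule.mem_top
        induction hx using Submodule.span_induction with
        | mem x hx => obtain ⟨j, rfl⟩ := hx; exact horto j
        | zero => exact inner_zero_right e
        | add x y _ _ hx hy => rw [inner_add_right, hx, hy, add_zero]
        | smul r x _ hx => rw [real_inner_smul_right, hx, mul_zero]
      exact inner_self_eq_zero.mp (hall e)
    exact sub_eq_zero.mp hzero
  have hcb : ∀ j, |c j| ≤ 1 := by
    intro j
    rw [hT] at hy hy'
    have h1 := hy j
    have h2 := hy' j
    rw [hc]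
    simp only
    rw [abs_div, abs_of_pos (hs j), div_le_one (hs j), abs_le]
    constructor <;> nlinarith [h1.1, h1.2, h2.1, h2.2]
  -- coordinate formulas
  have hwl : ∀ l, (A (∑ j, (δ j : ℝ) • N j)) l = ∑ j, (δ j : ℝ) * (z j l : ℝ) := by
    intro l
    rw [map_sum]
    have : ∀ j, A ((δ j : ℝ) • N j) = (δ j : ℝ) • A (N j) := fun j => map_smul A _ _
    simp only [this]
    rw [WithLp.ofLp_sum, Finset.sum_apply l Finset.univ fun j => ((δ j : ℝ) • A (N j)).ofLp]
    refine Finset.sum_congr rfl fun j _ => ?_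
    show (δ j : ℝ) * (A (N j)) l = _
    rw [hz]
  have hwl2 : ∀ l, (A (∑ j, (δ j : ℝ) • N j)) l
      = (∑ j, c j * (z j l : ℝ)) + (b i l - b i' l) := by
    intro l
    have hAyy : A y - A y' = ∑ j, c j • A (N j) := by
      rw [← map_sub, hyy', map_sum]
      exact Finset.sum_congr rfl fun j _ => map_smul A _ _
    rw [hw, hAyy]
    show (∑ j, c j • A (N j)) l + (b i l - b i' l) = _
    rw [WithLp.ofLp_sum, Finset.sum_apply l Finset.univ fun j => (c j • A (N j)).ofLp]
    congr 1
    refine Finset.sum_congr rfl fun j _ => ?_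
    show c j * (A (N j)) l = _
    rw [hz]
  refine ⟨fun l => ∑ j, δ j * z j l, ?_, ?_⟩
  · intro l _
    rw [Set.mem_Icc]
    have hb : |b i l - b i' l| ≤ D l := by
      rw [hD]
      have h1 : |b i l - b i' l| ≤ ∑ i1, |b i l - b i1 l| :=
        Finset.single_le_sum (f := fun i1 => |b i l - b i1 l|)
          (fun i1 _ => abs_nonneg _) (Finset.mem_univ i')
      have h2 : (∑ i1, |b i l - b i1 l|) ≤ ∑ i0, ∑ i1, |b i0 l - b i1 l| :=
        Finset.single_le_sum (f := fun i0 => ∑ i1, |b i0 l - b i1 l|)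
          (fun i0 _ => Finset.sum_nonneg fun _ _ => abs_nonneg _)
          (Finset.mem_univ i)
      exact h1.trans h2
    have hcsum : |∑ j, c j * (z j l : ℝ)| ≤ C l := by
      rw [hC]
      refine (Finset.abs_sum_le_sum_abs _ _).trans (Finset.sum_le_sum fun j _ => ?_)
      rw [abs_mul]
      exact mul_le_of_le_one_left (abs_nonneg _) (hcb j)
    have hreal : |∑ j, (δ j : ℝ) * (z j l : ℝ)| ≤ C l + D l := by
      rw [← hwl, hwl2]
      exact (abs_add_le _ _).trans (add_le_add hcsum hb)
    have hint : |(∑ j, δ j * z j l : ℤ)| ≤ M l := by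
      have h3 : (|(∑ j, δ j * z j l : ℤ)| : ℝ) ≤ ((M l : ℤ) : ℝ) := by
        rw [hM]
        push_cast
        exact hreal.trans (Int.le_ceil _)
      exact_mod_cast h3
    exact abs_le.mp hint
  · ext l
    show ((∑ j, δ j * z j l : ℤ) : ℝ) = _
    rw [hwl]
    push_cast
    rfl
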